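/- Fix n ≥ 1. There exist δ > 0 and c > 0 such that for every correlation matrix C ∈ ℝ^{n×n} with ‖C − I_n‖_F < δ, setting ρ̄_* = (1/n)·tr(C^{1/2}) and ρ̄_c = (1/n)·tr(L), where L is the Cholesky factor of C, one has |(1 − ρ̄_c) − 2·(1 − ρ̄_*)| ≤ c·‖C − I_n‖_F³. In particular, the Cholesky distance to perfect correlation is, to first order, twice the OASIS distance: (1 − ρ̄_c)/(1 − ρ̄_*) = 2·(1 + O(‖C − I_n‖_F)). -/

import Mathlib

open Matrix BigOperators

/-- Frobenius norm of a real square matrix. -/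
noncomputable def frobNorm {n : ℕ} (A : Matrix (Fin n) (Fin n) ℝ) : ℝ :=
  Real.sqrt (∑ i, ∑ j, (A i j) ^ 2)

open scoped ComplexOrder in
/-- The square root of a positive semidefinite matrix (the definition of
`Matrix.PosSemidef.sqrt` in Mathlib of December 2024, since removed). -/
noncomputable def Matrix.PosSemidef.sqrt {n : Type*} {𝕜 : Type*} [Fintype n] [DecidableEq n]
    [RCLike 𝕜] {A : Matrix n n 𝕜} (hA : A.PosSemidef) : Matrix n n 𝕜 :=
  hA.1.eigenvectorUnitary.1 * diagonal ((↑) ∘ (√·) ∘ hA.1.eigenvalues) *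
    (star hA.1.eigenvectorUnitary : Matrix n n 𝕜)

lemma scalar_sqrt' (s : ℝ) (hs : 0 ≤ s) :
    |1 - s + (s^2-1)/2 - (s^2-1)^2/8| ≤ |s^2-1|^3 := by
  have h1 : |1 - s + (s^2-1)/2 - (s^2-1)^2/8| = |s-1|^3 * ((3+s)/8) := by
    rw [show 1 - s + (s^2-1)/2 - (s^2-1)^2/8 = (-((s-1)^3)*((3+s)/8)) from by ring,
      abs_mul, abs_neg, abs_of_nonneg (by linarith : (0:ℝ) ≤ (3+s)/8), abs_pow]
  have h2 : |s^2-1|^3 = |s-1|^3 * (s+1)^3 := by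
    rw [show s^2-1 = (s-1)*(s+1) from by ring, abs_mul,
      abs_of_nonneg (by linarith : (0:ℝ) ≤ s+1), mul_pow]
  rw [h1, h2]
  refine mul_le_mul_of_nonneg_left ?_ (pow_nonneg (abs_nonneg _) 3)
  nlinarith [hs]

lemma scalar_sqrt (l : ℝ) (hl : 0 ≤ l) :
    |1 - Real.sqrt l + (l-1)/2 - (l-1)^2/8| ≤ |l-1|^3 := by
  have := scalar_sqrt' (Real.sqrt l) (Real.sqrt_nonneg l)
  rwa [Real.sq_sqrt hl] at this

lemma trace_conj {n : ℕ} (U D : Matrix (Fin n) (Fin n) ℝ) (h : star U * U = 1) :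
    (U * D * star U).trace = D.trace := by
  rw [Matrix.trace_mul_cycle, h, Matrix.one_mul]

lemma conjMul' {n : ℕ} (U A B : Matrix (Fin n) (Fin n) ℝ) (h : star U * U = 1) :
    (U * A * star U) * (U * B * star U) = U * (A * B) * star U := by
  simp only [Matrix.mul_assoc]
  rw [← Matrix.mul_assoc (star U) U (B * star U), h, Matrix.one_mul]

section eig
variable {n : ℕ} {C : Matrix (Fin n) (Fin n) ℝ} (hC : C.PosDef)

lemma sqrt_trace_eq :
    (hC.posSemidef.sqrt).trace = ∑ i, Real.sqrt (hC.posSemidef.1.eigenvalues i) := by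
  rw [Matrix.PosSemidef.sqrt, trace_conj _ _ (Unitary.coe_star_mul_self _), Matrix.trace_diagonal]
  simp [RCLike.ofReal_real_eq_id]

lemma spectral_real :
    C = (hC.posSemidef.1.eigenvectorUnitary : Matrix (Fin n) (Fin n) ℝ) *
      Matrix.diagonal (hC.posSemidef.1.eigenvalues) *
      (star (hC.posSemidef.1.eigenvectorUnitary : Matrix (Fin n) (Fin n) ℝ)) := by
  have := hC.posSemidef.1.spectral_theorem
  simpa [RCLike.ofReal_real_eq_id] using this

lemma trace_eig : C.trace = ∑ i, hC.posSemidef.1.eigenvalues i := by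
  conv_lhs => rw [spectral_real hC]
  rw [trace_conj _ _ (Unitary.coe_star_mul_self _), Matrix.trace_diagonal]

lemma trace_sq_eig : ((C - 1) * (C - 1)).trace = ∑ i, (hC.posSemidef.1.eigenvalues i - 1)^2 := by
  set U := (hC.posSemidef.1.eigenvectorUnitary : Matrix (Fin n) (Fin n) ℝ) with hU
  have h1 : star U * U = 1 := Unitary.coe_star_mul_self _
  have h2 : U * star U = 1 := Unitary.coe_mul_star_self _
  have hd : Matrix.diagonal (fun i => hC.posSemidef.1.eigenvalues i - 1)
      = Matrix.diagonal (hC.posSemidef.1.eigenvalues) - 1 := by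
    ext i j
    by_cases h : i = j <;> simp [Matrix.diagonal_apply, Matrix.one_apply, h]
  have hE : C - 1 = U * Matrix.diagonal (fun i => hC.posSemidef.1.eigenvalues i - 1) * star U := by
    rw [hd, Matrix.mul_sub, Matrix.mul_one, Matrix.sub_mul, h2]
    conv_lhs => rw [spectral_real hC]
  rw [hE, conjMul' _ _ _ h1, trace_conj _ _ h1, Matrix.diagonal_mul_diagonal,
    Matrix.trace_diagonal]
  simp [pow_two]
end eig

lemma trace_mul_transpose_self {n : ℕ} (A : Matrix (Fin n) (Fin n) ℝ) :
    (A * Aᵀ).trace = ∑ i, ∑ j, (A i j)^2 := by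
  simp [Matrix.trace, Matrix.mul_apply, Matrix.diag, Matrix.transpose_apply, pow_two]

lemma sum_split_at {n : ℕ} (j : Fin n) (f : Fin n → ℝ) (hzero : ∀ k, j < k → f k = 0) :
    ∑ k, f k = (∑ k ∈ Finset.univ.filter (fun k => k < j), f k) + f j := by
  rw [← Finset.sum_filter_add_sum_filter_not Finset.univ (fun k => k < j)]
  congr 1
  refine Finset.sum_eq_single_of_mem j (by simp) ?_
  intro k hk hkj
  have hknlt : ¬ k < j := by simpa using (Finset.mem_filter.mp hk).2
  exact hzero k ((not_lt.mp hknlt).lt_of_ne (Ne.symm hkj))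

set_option maxHeartbeats 1000000 in
/-- **Twice the proximity to perfect correlation.** For every fixed `n ≥ 1` there
are `δ, c > 0` such that for any correlation matrix `C` with `‖C − I‖_F < δ`, with
`ρ̄_* = (1/n)·tr(C^{1/2})` and `ρ̄_c = (1/n)·tr(L)` (where `L` is the Cholesky
factor of `C`), one has `|(1 − ρ̄_c) − 2(1 − ρ̄_*)| ≤ c·‖C − I‖_F³`. -/
theorem stmt_14 (n : ℕ) (hn : 1 ≤ n) :
    ∃ δ > (0 : ℝ), ∃ c > (0 : ℝ), ∀ C : Matrix (Fin n) (Fin n) ℝ,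
      ∀ hC : C.PosDef, (∀ i, C i i = 1) → frobNorm (C - 1) < δ →
      ∀ L : Matrix (Fin n) (Fin n) ℝ,
        (∀ i j : Fin n, i < j → L i j = 0) → (∀ i, 0 < L i i) → L * Lᵀ = C →
        |(1 - (1 / (n : ℝ)) * L.trace)
            - 2 * (1 - (1 / (n : ℝ)) * (hC.posSemidef.sqrt).trace)|
          ≤ c * frobNorm (C - 1) ^ 3 := by
  have hn1 : (1:ℝ) ≤ (n:ℝ) := by exact_mod_cast hn
  have hn0 : (0:ℝ) < (n:ℝ) := by linarith
  refine ⟨1/(20*(n:ℝ)), by positivity, 100*(n:ℝ)^3, by positivity, ?_⟩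
  intro C hC hdiag hsmall L hlow hLd hLLT
  -- basic quantities
  set Q : ℝ := ∑ i, ∑ j, ((C - 1) i j)^2 with hQdef
  set ε : ℝ := frobNorm (C - 1) with hεdef
  have hQ0 : 0 ≤ Q := Finset.sum_nonneg fun i _ => Finset.sum_nonneg fun j _ => sq_nonneg _
  have hε0 : 0 ≤ ε := Real.sqrt_nonneg _
  have hε2 : ε^2 = Q := Real.sq_sqrt hQ0
  have hnε : (n:ℝ) * ε ≤ 1/20 := by
    have : ε < 1/(20*(n:ℝ)) := hsmall
    rw [lt_div_iff₀ (by positivity)] at this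
    nlinarith
  have hε1 : ε ≤ 1/20 := by nlinarith
  -- row norms of L
  have hrow : ∀ i, ∑ k, (L i k)^2 = 1 := by
    intro i
    have h := congrFun (congrFun hLLT i) i
    rw [Matrix.mul_apply] at h
    simp only [Matrix.transpose_apply] at h
    rw [hdiag i] at h
    rw [← h]
    exact Finset.sum_congr rfl fun k _ => pow_two _
  have hentry : ∀ i k, (L i k)^2 ≤ 1 := by
    intro i k
    rw [← hrow i]
    exact Finset.single_le_sum (fun k _ => sq_nonneg (L i k)) (Finset.mem_univ k)
  have hdle : ∀ i, L i i ≤ 1 := by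
    intro i
    nlinarith [hentry i i, (hLd i)]
  -- off-diagonal entries of C
  have hoffC : ∀ i j, i ≠ j → |C i j| ≤ ε := by
    intro i j hij
    have h1 : ((C - 1) i j)^2 ≤ Q := by
      calc ((C - 1) i j)^2 ≤ ∑ l, ((C - 1) i l)^2 :=
            Finset.single_le_sum (f := fun l => ((C - 1) i l)^2)
              (fun l _ => sq_nonneg _) (Finset.mem_univ j)
        _ ≤ Q := Finset.single_le_sum
            (f := fun r => ∑ l, ((C - 1) r l)^2)
            (fun r _ => Finset.sum_nonneg fun l _ => sq_nonneg _) (Finset.mem_univ i)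
    have h2 : (C - 1) i j = C i j := by
      simp [Matrix.sub_apply, Matrix.one_apply_ne hij]
    rw [h2] at h1
    have := Real.sqrt_le_sqrt h1
    rwa [Real.sqrt_sq_eq_abs] at this
  -- splitting lemmas
  have hCsum : ∀ i j, C i j = ∑ k, L i k * L j k := by
    intro i j
    have h := congrFun (congrFun hLLT i) j
    rw [Matrix.mul_apply] at h
    simp only [Matrix.transpose_apply] at h
    exact h.symm
  have hdiagsq : ∀ j : Fin n,
      (∑ k ∈ Finset.univ.filter (fun k => k < j), (L j k)^2) + (L j j)^2 = 1 := by
    intro j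
    have h0 := sum_split_at j (fun k => (L j k)^2)
      (fun k hk => by show (L j k)^2 = 0; rw [hlow j k hk]; ring)
    have h1 : ∑ k, (L j k)^2
        = (∑ k ∈ Finset.univ.filter (fun k => k < j), (L j k)^2) + (L j j)^2 := h0
    rw [hrow j] at h1
    linarith [h1]
  have hoffsplit : ∀ i j : Fin n, j < i →
      C i j = (∑ k ∈ Finset.univ.filter (fun k => k < j), L i k * L j k) + L i j * L j j := by
    intro i j hji
    have h0 := sum_split_at j (fun k => L i k * L j k)
      (fun k hk => by show L i k * L j k = 0; rw [hlow j k hk]; ring)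
    have h1 : ∑ k, L i k * L j k
        = (∑ k ∈ Finset.univ.filter (fun k => k < j), L i k * L j k) + L i j * L j j := h0
    rw [← hCsum i j] at h1
    exact h1
  -- the key induction: off-diagonal entries of L are ≤ 2ε
  have key : ∀ m : ℕ, ∀ j i : Fin n, (j:ℕ) = m → j < i → |L i j| ≤ 2*ε := by
    intro m
    induction m using Nat.strong_induction_on with
    | _ m ih =>
      intro j i hjm hji
      have prev : ∀ k : Fin n, k < j → ∀ i' : Fin n, k < i' → |L i' k| ≤ 2*ε := by
        intro k hk i' hk'
        exact ih (k:ℕ) (by rw [← hjm]; exact hk) k i' rfl hk'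
      -- bound on the partial row sums
      have hSj : (∑ k ∈ Finset.univ.filter (fun k => k < j), (L j k)^2) ≤ (n:ℝ) * (4*ε^2) := by
        have hterm : ∀ k ∈ Finset.univ.filter (fun k => k < j), (L j k)^2 ≤ 4*ε^2 := by
          intro k hk
          have hkj : k < j := by simpa using (Finset.mem_filter.mp hk).2
          have h := prev k hkj j hkj
          calc (L j k)^2 = |L j k|^2 := (sq_abs _).symm
            _ ≤ (2*ε)^2 := by
                apply pow_le_pow_left₀ (abs_nonneg _) h
            _ ≤ 4*ε^2 := by nlinarith
        calc (∑ k ∈ Finset.univ.filter (fun k => k < j), (L j k)^2)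
            ≤ (Finset.univ.filter (fun k => k < j)).card • (4*ε^2) :=
              Finset.sum_le_card_nsmul _ _ _ hterm
          _ = ((Finset.univ.filter (fun k => k < j)).card : ℝ) * (4*ε^2) := by
              rw [nsmul_eq_mul]
          _ ≤ (n:ℝ) * (4*ε^2) := by
              apply mul_le_mul_of_nonneg_right _ (by positivity)
              have : (Finset.univ.filter (fun k => k < j)).card ≤ n := by
                calc (Finset.univ.filter (fun k => k < j)).card
                    ≤ (Finset.univ : Finset (Fin n)).card := Finset.card_filter_le _ _
                  _ = n := by simp
              exact_mod_cast this
      have h4ne : 4*((n:ℝ)*ε^2) ≤ 1/100 := by nlinarith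
      have hLjj : (9:ℝ)/10 ≤ L j j := by
        have h1 := hdiagsq j
        have h2 := hLd j
        nlinarith [hSj]
      -- the off-diagonal estimate
      have hS' : |∑ k ∈ Finset.univ.filter (fun k => k < j), L i k * L j k| ≤ (n:ℝ) * (4*ε^2) := by
        calc |∑ k ∈ Finset.univ.filter (fun k => k < j), L i k * L j k|
            ≤ ∑ k ∈ Finset.univ.filter (fun k => k < j), |L i k * L j k| :=
              Finset.abs_sum_le_sum_abs _ _
          _ ≤ (Finset.univ.filter (fun k => k < j)).card • (4*ε^2) := by
              apply Finset.sum_le_card_nsmul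
              intro k hk
              have hkj : k < j := by simpa using (Finset.mem_filter.mp hk).2
              have h1 := prev k hkj i (hkj.trans hji)
              have h2 := prev k hkj j hkj
              rw [abs_mul]
              calc |L i k| * |L j k| ≤ (2*ε) * (2*ε) :=
                    mul_le_mul h1 h2 (abs_nonneg _) (by linarith [hε0])
                _ ≤ 4*ε^2 := by nlinarith
          _ = ((Finset.univ.filter (fun k => k < j)).card : ℝ) * (4*ε^2) := by
              rw [nsmul_eq_mul]
          _ ≤ (n:ℝ) * (4*ε^2) := by
              apply mul_le_mul_of_nonneg_right _ (by positivity)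
              have : (Finset.univ.filter (fun k => k < j)).card ≤ n := by
                calc (Finset.univ.filter (fun k => k < j)).card
                    ≤ (Finset.univ : Finset (Fin n)).card := Finset.card_filter_le _ _
                  _ = n := by simp
              exact_mod_cast this
      have hCij : |C i j| ≤ ε := hoffC i j (ne_of_gt hji)
      have heq : L i j * L j j
          = C i j - ∑ k ∈ Finset.univ.filter (fun k => k < j), L i k * L j k := by
        have := hoffsplit i j hji
        linarith [this]
      have habs : |L i j| * L j j ≤ ε + (n:ℝ)*(4*ε^2) := by
        rw [← abs_of_nonneg (le_of_lt (hLd j)), ← abs_mul, heq]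
        calc |C i j - ∑ k ∈ Finset.univ.filter (fun k => k < j), L i k * L j k|
            ≤ |C i j| + |∑ k ∈ Finset.univ.filter (fun k => k < j), L i k * L j k| :=
              abs_sub _ _
          _ ≤ ε + (n:ℝ)*(4*ε^2) := add_le_add hCij hS'
      have hne : (n:ℝ)*(4*ε^2) ≤ ε/5 := by nlinarith
      have hmul : |L i j| * (9/10) ≤ |L i j| * L j j :=
        mul_le_mul_of_nonneg_left hLjj (abs_nonneg (L i j))
      linarith [hmul, habs, hne]
  have hklow : ∀ i j : Fin n, j < i → |L i j| ≤ 2*ε := fun i j h => key (j:ℕ) j i rfl h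
  -- all off-diagonal entries bounded
  have hoffL : ∀ i j : Fin n, i ≠ j → |L i j| ≤ 2*ε := by
    intro i j hij
    rcases lt_or_gt_of_ne hij with h | h
    · rw [hlow i j h, abs_zero]; linarith
    · exact hklow i j h
  -- diagonal deficit bound
  have hSb : ∀ j : Fin n,
      (∑ k ∈ Finset.univ.filter (fun k => k < j), (L j k)^2) ≤ (n:ℝ) * (4*ε^2) := by
    intro j
    have hterm : ∀ k ∈ Finset.univ.filter (fun k => k < j), (L j k)^2 ≤ 4*ε^2 := by
      intro k hk
      have hkj : k < j := by simpa using (Finset.mem_filter.mp hk).2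
      have h := hklow j k hkj
      calc (L j k)^2 = |L j k|^2 := (sq_abs _).symm
        _ ≤ (2*ε)^2 := by apply pow_le_pow_left₀ (abs_nonneg _) h
        _ ≤ 4*ε^2 := by nlinarith
    calc (∑ k ∈ Finset.univ.filter (fun k => k < j), (L j k)^2)
        ≤ (Finset.univ.filter (fun k => k < j)).card • (4*ε^2) :=
          Finset.sum_le_card_nsmul _ _ _ hterm
      _ = ((Finset.univ.filter (fun k => k < j)).card : ℝ) * (4*ε^2) := by rw [nsmul_eq_mul]
      _ ≤ (n:ℝ) * (4*ε^2) := by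
          apply mul_le_mul_of_nonneg_right _ (by positivity)
          have : (Finset.univ.filter (fun k => k < j)).card ≤ n := by
            calc (Finset.univ.filter (fun k => k < j)).card
                ≤ (Finset.univ : Finset (Fin n)).card := Finset.card_filter_le _ _
              _ = n := by simp
          exact_mod_cast this
  have hdiagL : ∀ i, 1 - L i i ≤ 4*(n:ℝ)*ε^2 := by
    intro i
    have h1 := hdiagsq i
    have h2 := hSb i
    have h3 := hLd i
    have h4 := hdle i
    nlinarith
  have hdiagL0 : ∀ i, 0 ≤ 1 - L i i := fun i => by linarith [hdle i]
  -- entry bounds for D = L - 1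
  have hDdiag : ∀ i, |(L - 1) i i| ≤ 4*(n:ℝ)*ε^2 := by
    intro i
    have : (L - 1) i i = -(1 - L i i) := by
      simp only [Matrix.sub_apply, Matrix.one_apply_eq]
      ring
    rw [this, abs_neg, abs_of_nonneg (hdiagL0 i)]
    exact hdiagL i
  have hD : ∀ i j, |(L - 1) i j| ≤ 2*ε := by
    intro i j
    by_cases h : i = j
    · subst h
      calc |(L - 1) i i| ≤ 4*(n:ℝ)*ε^2 := hDdiag i
        _ ≤ 2*ε := by nlinarith
    · have : (L - 1) i j = L i j := by simp [Matrix.sub_apply, Matrix.one_apply_ne h]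
      rw [this]; exact hoffL i j h
  have hDoffzero : ∀ i j : Fin n, i ≠ j → (L - 1) i j * (L - 1) j i = 0 := by
    intro i j hij
    have e1 : (L - 1) i j = L i j := by simp [Matrix.sub_apply, Matrix.one_apply_ne hij]
    have e2 : (L - 1) j i = L j i := by simp [Matrix.sub_apply, Matrix.one_apply_ne (Ne.symm hij)]
    rw [e1, e2]
    rcases lt_or_gt_of_ne hij with h | h
    · rw [hlow i j h]; ring
    · rw [hlow j i h]; ring
  -- d2 and the exact trace identity
  set d2 : ℝ := ∑ i, ∑ j, ((L - 1) i j)^2 with hd2def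
  have htrC : C.trace = (n:ℝ) := by
    rw [Matrix.trace]
    simp only [Matrix.diag]
    rw [Finset.sum_congr rfl (fun i _ => hdiag i)]
    simp
  have htrL : 2 * ((n:ℝ) - L.trace) = d2 := by
    have hmat : (L - 1) * (L - 1)ᵀ = C - L - Lᵀ + 1 := by
      rw [← hLLT, Matrix.transpose_sub, Matrix.transpose_one, Matrix.sub_mul, Matrix.mul_sub,
        Matrix.mul_sub, Matrix.mul_one, Matrix.one_mul, Matrix.one_mul]
      abel
    have : d2 = ((L - 1) * (L - 1)ᵀ).trace := (trace_mul_transpose_self _).symm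
    rw [this, hmat, Matrix.trace_add, Matrix.trace_sub, Matrix.trace_sub, Matrix.trace_transpose,
      Matrix.trace_one, htrC]
    simp
    ring
  -- d2 is small
  have hd2b : d2 ≤ 4*(n:ℝ)^2*ε^2 := by
    have hterm : ∀ i : Fin n, ∑ j, ((L - 1) i j)^2 ≤ (n:ℝ) * (4*ε^2) := by
      intro i
      calc ∑ j, ((L - 1) i j)^2 ≤ (Finset.univ : Finset (Fin n)).card • (4*ε^2) := by
            apply Finset.sum_le_card_nsmul
            intro j _
            calc ((L - 1) i j)^2 = |(L - 1) i j|^2 := (sq_abs _).symm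
              _ ≤ (2*ε)^2 := by apply pow_le_pow_left₀ (abs_nonneg _) (hD i j)
              _ ≤ 4*ε^2 := by nlinarith
        _ = (n:ℝ) * (4*ε^2) := by simp [nsmul_eq_mul]
    calc d2 ≤ ∑ _i : Fin n, (n:ℝ) * (4*ε^2) := Finset.sum_le_sum (fun i _ => hterm i)
      _ = (n:ℝ) * ((n:ℝ) * (4*ε^2)) := by simp [Finset.sum_const, nsmul_eq_mul]
      _ = 4*(n:ℝ)^2*ε^2 := by ring
  -- expansion of C - 1
  have hmat2 : C - 1 = (L - 1) + (L - 1)ᵀ + (L - 1) * (L - 1)ᵀ := by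
    rw [← hLLT, Matrix.transpose_sub, Matrix.transpose_one, Matrix.sub_mul, Matrix.mul_sub,
      Matrix.mul_sub, Matrix.mul_one, Matrix.one_mul, Matrix.one_mul]
    abel
  have hexp : ∀ i j, (C - 1) i j = (L - 1) i j + (L - 1) j i + ∑ k, (L - 1) i k * (L - 1) j k := by
    intro i j
    have h := congrFun (congrFun hmat2 i) j
    rw [h]
    simp only [Matrix.add_apply, Matrix.transpose_apply, Matrix.mul_apply]
  -- the M bound
  have hM : ∀ i j, |∑ k, (L - 1) i k * (L - 1) j k| ≤ (n:ℝ) * (4*ε^2) := by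
    intro i j
    calc |∑ k, (L - 1) i k * (L - 1) j k| ≤ ∑ k, |(L - 1) i k * (L - 1) j k| :=
          Finset.abs_sum_le_sum_abs _ _
      _ ≤ (Finset.univ : Finset (Fin n)).card • (4*ε^2) := by
          apply Finset.sum_le_card_nsmul
          intro k _
          rw [abs_mul]
          calc |(L - 1) i k| * |(L - 1) j k| ≤ (2*ε) * (2*ε) :=
                mul_le_mul (hD i k) (hD j k) (abs_nonneg _) (by linarith)
            _ ≤ 4*ε^2 := by nlinarith
      _ = (n:ℝ) * (4*ε^2) := by simp [nsmul_eq_mul]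
  -- per-entry remainder bound
  have habs : ∀ i j, |((C - 1) i j)^2 - (((L - 1) i j)^2 + ((L - 1) j i)^2)|
      ≤ 32*(n:ℝ)*ε^3 + 112*(n:ℝ)^2*ε^4 := by
    intro i j
    set a := (L - 1) i j with ha
    set b := (L - 1) j i with hb
    set m := ∑ k, (L - 1) i k * (L - 1) j k with hm
    have hid : ((C - 1) i j)^2 - (a^2 + b^2) = 2*(a*b) + 2*(a+b)*m + m^2 := by
      rw [hexp i j]; ring
    rw [hid]
    have hma : |a| ≤ 2*ε := hD i j
    have hmb : |b| ≤ 2*ε := hD j i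
    have hmm : |m| ≤ (n:ℝ) * (4*ε^2) := hM i j
    have habm : |2*(a+b)*m| ≤ 32*(n:ℝ)*ε^3 := by
      rw [abs_mul, abs_mul]
      have h1 : |a+b| ≤ 4*ε := by
        calc |a+b| ≤ |a| + |b| := abs_add_le _ _
          _ ≤ 4*ε := by linarith
      have h2 : |(2:ℝ)| = 2 := by norm_num
      rw [h2]
      calc 2 * |a+b| * |m| ≤ 2 * (4*ε) * ((n:ℝ) * (4*ε^2)) := by
            apply mul_le_mul
            · apply mul_le_mul_of_nonneg_left h1 (by norm_num)
            · exact hmm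
            · exact abs_nonneg _
            · positivity
        _ = 32*(n:ℝ)*ε^3 := by ring
    have hm2 : m^2 ≤ 16*(n:ℝ)^2*ε^4 := by
      calc m^2 = |m|^2 := (sq_abs _).symm
        _ ≤ ((n:ℝ) * (4*ε^2))^2 := by apply pow_le_pow_left₀ (abs_nonneg _) hmm
        _ = 16*(n:ℝ)^2*ε^4 := by ring
    have hab : |2*(a*b)| ≤ 32*(n:ℝ)^2*ε^4 := by
      by_cases h : i = j
      · subst h
        have : a = b := rfl
        rw [abs_mul]
        have h2 : |(2:ℝ)| = 2 := by norm_num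
        rw [h2]
        have haa : |a*b| ≤ 16*(n:ℝ)^2*ε^4 := by
          rw [abs_mul, ← this]
          calc |a| * |a| ≤ (4*(n:ℝ)*ε^2) * (4*(n:ℝ)*ε^2) :=
                mul_le_mul (hDdiag i) (hDdiag i) (abs_nonneg _) (by positivity)
            _ = 16*(n:ℝ)^2*ε^4 := by ring
        nlinarith [haa]
      · rw [hDoffzero i j h]
        simp
        positivity
    calc |2*(a*b) + 2*(a+b)*m + m^2| ≤ |2*(a*b)| + |2*(a+b)*m| + |m^2| := by
          calc |2*(a*b) + 2*(a+b)*m + m^2| ≤ |2*(a*b) + 2*(a+b)*m| + |m^2| := abs_add_le _ _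
            _ ≤ |2*(a*b)| + |2*(a+b)*m| + |m^2| := by linarith [abs_add_le (2*(a*b)) (2*(a+b)*m)]
      _ ≤ 32*(n:ℝ)^2*ε^4 + 32*(n:ℝ)*ε^3 + 16*(n:ℝ)^2*ε^4 := by
          have hmm2 : |m^2| = m^2 := abs_of_nonneg (sq_nonneg _)
          rw [hmm2]
          linarith [hab, habm, hm2]
      _ ≤ 32*(n:ℝ)*ε^3 + 112*(n:ℝ)^2*ε^4 := by
          have hp : (0:ℝ) ≤ (n:ℝ)^2*ε^4 := by positivity
          linarith
  -- summing the remainder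
  have hQ2d2 : |Q - 2*d2| ≤ 38*(n:ℝ)^3*ε^3 := by
    have hsplit : Q - 2*d2
        = ∑ i, ∑ j, (((C - 1) i j)^2 - (((L - 1) i j)^2 + ((L - 1) j i)^2)) := by
      have h1 : ∑ i, ∑ j, ((L - 1) j i)^2 = d2 := Finset.sum_comm
      simp only [Finset.sum_sub_distrib, Finset.sum_add_distrib]
      rw [h1]
      ring
    rw [hsplit]
    have hstep : |∑ i, ∑ j, (((C - 1) i j)^2 - (((L - 1) i j)^2 + ((L - 1) j i)^2))|
        ≤ (n:ℝ)^2 * (32*(n:ℝ)*ε^3 + 112*(n:ℝ)^2*ε^4) := by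
      calc |∑ i, ∑ j, (((C - 1) i j)^2 - (((L - 1) i j)^2 + ((L - 1) j i)^2))|
          ≤ ∑ i, |∑ j, (((C - 1) i j)^2 - (((L - 1) i j)^2 + ((L - 1) j i)^2))| :=
            Finset.abs_sum_le_sum_abs _ _
        _ ≤ ∑ _i : Fin n, (n:ℝ) * (32*(n:ℝ)*ε^3 + 112*(n:ℝ)^2*ε^4) := by
            apply Finset.sum_le_sum
            intro i _
            calc |∑ j, (((C - 1) i j)^2 - (((L - 1) i j)^2 + ((L - 1) j i)^2))|
                ≤ ∑ j, |(((C - 1) i j)^2 - (((L - 1) i j)^2 + ((L - 1) j i)^2))| :=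
                  Finset.abs_sum_le_sum_abs _ _
              _ ≤ ∑ _j : Fin n, (32*(n:ℝ)*ε^3 + 112*(n:ℝ)^2*ε^4) :=
                  Finset.sum_le_sum (fun j _ => habs i j)
              _ = (n:ℝ) * (32*(n:ℝ)*ε^3 + 112*(n:ℝ)^2*ε^4) := by
                  rw [Finset.sum_const, Finset.card_univ, Fintype.card_fin, nsmul_eq_mul]
        _ = (n:ℝ) * ((n:ℝ) * (32*(n:ℝ)*ε^3 + 112*(n:ℝ)^2*ε^4)) := by
            rw [Finset.sum_const, Finset.card_univ, Fintype.card_fin, nsmul_eq_mul]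
        _ = (n:ℝ)^2 * (32*(n:ℝ)*ε^3 + 112*(n:ℝ)^2*ε^4) := by ring
    refine le_trans hstep ?_
    have hq : (0:ℝ) ≤ 112*(n:ℝ)^3*ε^3 := by positivity
    nlinarith [mul_le_mul_of_nonneg_right hnε hq, pow_nonneg hε0 3, hn0]
  -- the eigenvalue side
  set lam : Fin n → ℝ := hC.posSemidef.1.eigenvalues with hlam
  have hlam0 : ∀ i, 0 ≤ lam i := fun i => hC.posSemidef.eigenvalues_nonneg i
  have hsumlam : ∑ i, lam i = (n:ℝ) := by
    rw [← trace_eig hC, htrC]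
  have hsym : (C - 1)ᵀ = C - 1 := by
    have hH : Cᵀ = C := by
      have hherm : Cᴴ = C := hC.posSemidef.1
      calc Cᵀ = Cᴴ := by ext i j; simp [Matrix.conjTranspose_apply]
        _ = C := hherm
    rw [Matrix.transpose_sub, hH, Matrix.transpose_one]
  have hsum2 : ∑ i, (lam i - 1)^2 = Q := by
    rw [← trace_sq_eig hC]
    have : ((C - 1) * (C - 1)) = ((C-1) * (C-1)ᵀ) := by rw [hsym]
    rw [this, trace_mul_transpose_self]
  have hlammax : ∀ i, |lam i - 1| ≤ ε := by
    intro i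
    have h1 : (lam i - 1)^2 ≤ Q := by
      rw [← hsum2]
      exact Finset.single_le_sum (f := fun k => (lam k - 1)^2)
        (fun k _ => sq_nonneg _) (Finset.mem_univ i)
    have := Real.sqrt_le_sqrt h1
    rwa [Real.sqrt_sq_eq_abs] at this
  set trS : ℝ := (hC.posSemidef.sqrt).trace with htrS
  have htrSval : trS = ∑ i, Real.sqrt (lam i) := sqrt_trace_eq hC
  have hYbound : |((n:ℝ) - trS) - Q/8| ≤ ε^3 := by
    have hgsplit : ((n:ℝ) - trS) - Q/8
        = ∑ i, (1 - Real.sqrt (lam i) + (lam i - 1)/2 - (lam i - 1)^2/8) := by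
      rw [htrSval]
      have e1 : ∑ i, (1 - Real.sqrt (lam i) + (lam i - 1)/2 - (lam i - 1)^2/8)
          = (∑ _i : Fin n, (1:ℝ)) - (∑ i, Real.sqrt (lam i)) + (∑ i, (lam i - 1))/2
            - (∑ i, (lam i - 1)^2)/8 := by
        rw [Finset.sum_sub_distrib, Finset.sum_add_distrib, Finset.sum_sub_distrib,
          ← Finset.sum_div, ← Finset.sum_div]
      rw [e1, hsum2]
      have e2 : ∑ i, (lam i - 1) = 0 := by
        rw [Finset.sum_sub_distrib, hsumlam]
        simp
      rw [e2]
      simp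
    rw [hgsplit]
    calc |∑ i, (1 - Real.sqrt (lam i) + (lam i - 1)/2 - (lam i - 1)^2/8)|
        ≤ ∑ i, |1 - Real.sqrt (lam i) + (lam i - 1)/2 - (lam i - 1)^2/8| :=
          Finset.abs_sum_le_sum_abs _ _
      _ ≤ ∑ i, ε * (lam i - 1)^2 := by
          apply Finset.sum_le_sum
          intro i _
          calc |1 - Real.sqrt (lam i) + (lam i - 1)/2 - (lam i - 1)^2/8|
              ≤ |lam i - 1|^3 := scalar_sqrt (lam i) (hlam0 i)
            _ = |lam i - 1| * |lam i - 1|^2 := by ring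
            _ ≤ ε * (lam i - 1)^2 := by
                rw [sq_abs]
                exact mul_le_mul_of_nonneg_right (hlammax i) (sq_nonneg _)
      _ = ε * Q := by rw [← Finset.mul_sum, hsum2]
      _ = ε^3 := by rw [← hε2]; ring
  -- final combination
  have hX : (n:ℝ) - L.trace = d2/2 := by linarith
  have hXbound : |((n:ℝ) - L.trace) - Q/4| ≤ 19*(n:ℝ)^3*ε^3 := by
    rw [hX]
    have : d2/2 - Q/4 = -(Q - 2*d2)/4 := by ring
    rw [this, abs_div, abs_neg]
    have h4 : |(4:ℝ)| = 4 := by norm_num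
    rw [h4]
    have hp : (0:ℝ) ≤ (n:ℝ)^3*ε^3 := by positivity
    linarith [hQ2d2]
  have hfinal : |((n:ℝ) - L.trace) - 2*((n:ℝ) - trS)| ≤ 21*(n:ℝ)^3*ε^3 := by
    have e : ((n:ℝ) - L.trace) - 2*((n:ℝ) - trS)
        = (((n:ℝ) - L.trace) - Q/4) - 2*(((n:ℝ) - trS) - Q/8) := by ring
    rw [e]
    calc |(((n:ℝ) - L.trace) - Q/4) - 2*(((n:ℝ) - trS) - Q/8)|
        ≤ |((n:ℝ) - L.trace) - Q/4| + |2*(((n:ℝ) - trS) - Q/8)| := abs_sub _ _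
      _ ≤ 19*(n:ℝ)^3*ε^3 + 2*ε^3 := by
          rw [abs_mul]
          have h2 : |(2:ℝ)| = 2 := by norm_num
          rw [h2]
          linarith [hXbound, hYbound]
      _ ≤ 21*(n:ℝ)^3*ε^3 := by
          have h3 : (1:ℝ) ≤ (n:ℝ)^3 := by nlinarith [hn1]
          nlinarith [mul_nonneg (sub_nonneg.mpr h3) (pow_nonneg hε0 3)]
  have hrewrite : (1 - (1 / (n : ℝ)) * L.trace) - 2 * (1 - (1 / (n : ℝ)) * trS)
      = (1/(n:ℝ)) * (((n:ℝ) - L.trace) - 2*((n:ℝ) - trS)) := by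
    field_simp
  rw [hrewrite, abs_mul]
  have h1n : |(1:ℝ)/(n:ℝ)| = 1/(n:ℝ) := abs_of_pos (by positivity)
  rw [h1n]
  calc (1/(n:ℝ)) * |((n:ℝ) - L.trace) - 2*((n:ℝ) - trS)|
      ≤ (1/(n:ℝ)) * (21*(n:ℝ)^3*ε^3) := by
        apply mul_le_mul_of_nonneg_left hfinal (by positivity)
    _ ≤ 100*(n:ℝ)^3 * ε^3 := by
        rw [div_mul_eq_mul_div, one_mul, div_le_iff₀ hn0]
        have hp : (0:ℝ) ≤ (n:ℝ)^3*ε^3 := by positivity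
        nlinarith [hp, mul_le_mul_of_nonneg_left hn1 hp]
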